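/- The group G acts transitively on Y: for any y, y′ ∈ Y there exists g ∈ G with g(y) = y′. -/

import Mathlib

open scoped TensorProduct

/-- The lattice `L = ℤ⁷` with standard basis `ℓ, e₁, …, e₆`. -/
abbrev L : Type := Fin 7 → ℤ

/-- The symmetric bilinear form `B(x,y) = x₀y₀ − x₁y₁ − ⋯ − x₆y₆`. -/
def B (x y : L) : ℤ :=
  x 0 * y 0 - (x 1 * y 1 + x 2 * y 2 + x 3 * y 3 + x 4 * y 4 + x 5 * y 5 + x 6 * y 6)

/-- `h = 3ℓ − e₁ − ⋯ − e₆`, the hyperplane class, with `B(h,h) = 3`. -/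
def hv : L := ![3, -1, -1, -1, -1, -1, -1]

/-- The set of lines: `Y = {y ∈ L : B(h,y) = 1 ∧ B(y,y) = −1}`. -/
def Yset : Set L := {y | B hv y = 1 ∧ B y y = -1}

/-- The set of roots: `R = {α ∈ L : B(h,α) = 0 ∧ B(α,α) = −2}`. -/
def Rset : Set L := {a | B hv a = 0 ∧ B a a = -2}

/-- `g` is a reflection `s_α` for some root `α ∈ R`. -/
def IsReflection (g : L ≃ₗ[ℤ] L) : Prop := ∃ α ∈ Rset, ∀ x, g x = x + B x α • α

/-- `G = Weyl(E₆)`, the subgroup of `GL(L)` generated by the reflections `s_α`, `α ∈ R`. -/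
def G : Subgroup (L ≃ₗ[ℤ] L) := Subgroup.closure {g | IsReflection g}

/- ### Auxiliary infrastructure -/

lemma B_add_left (x y z : L) : B (x + y) z = B x z + B y z := by
  simp only [B, Pi.add_apply]; ring

lemma B_smul_left (c : ℤ) (x z : L) : B (c • x) z = c * B x z := by
  simp only [B, Pi.smul_apply, smul_eq_mul]; ring

/-- The reflection in a root `α`, as a linear map. -/
def rmap (α : L) : L →ₗ[ℤ] L where
  toFun x := x + B x α • α
  map_add' x y := by show (x + y) + B (x + y) α • α = (x + B x α • α) + (y + B y α • α); rw [B_add_left, add_smul]; abel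
  map_smul' c x := by
    simp only [RingHom.id_apply]
    rw [B_smul_left, mul_smul, smul_add]

lemma rmap_invol (α : L) (h2 : B α α = -2) (x : L) : rmap α (rmap α x) = x := by
  show (x + B x α • α) + B (x + B x α • α) α • α = x
  rw [B_add_left, B_smul_left, h2]
  have h : B x α + B x α * -2 = -(B x α) := by ring
  rw [h, neg_smul]
  abel

/-- The reflection in a root `α`, as a linear equivalence. -/
def sE (α : L) (h2 : B α α = -2) : L ≃ₗ[ℤ] L :=
  LinearEquiv.ofLinear (rmap α) (rmap α)
    (LinearMap.ext fun x => rmap_invol α h2 x)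
    (LinearMap.ext fun x => rmap_invol α h2 x)

lemma sE_mem (α : L) (h0 : B hv α = 0) (h2 : B α α = -2) : sE α h2 ∈ G :=
  Subgroup.subset_closure ⟨α, ⟨h0, h2⟩, fun _ => rfl⟩

/-- The relation "there is an element of `G` taking `v` to `v'`". -/
def WRel (v v' : L) : Prop := ∃ g ∈ G, g v = v'

lemma rel_refl (v : L) : WRel v v := ⟨1, one_mem G, rfl⟩

lemma rel_symm {v v' : L} (h : WRel v v') : WRel v' v := by
  obtain ⟨g, hg, hgv⟩ := h
  exact ⟨g⁻¹, inv_mem hg, by rw [← hgv]; exact g.symm_apply_apply v⟩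

lemma rel_trans {u v w : L} (h1 : WRel u v) (h2 : WRel v w) : WRel u w := by
  obtain ⟨g, hg, hgv⟩ := h1
  obtain ⟨g', hg', hgv'⟩ := h2
  exact ⟨g' * g, mul_mem hg' hg, by show g' (g u) = w; rw [hgv, hgv']⟩

lemma rel_step (v v' α : L) (h0 : B hv α = 0) (h2 : B α α = -2)
    (h : v + B v α • α = v') : WRel v v' :=
  ⟨sE α h2, sE_mem α h0 h2, h⟩

lemma eta7 (y : L) : y = ![y 0, y 1, y 2, y 3, y 4, y 5, y 6] := by
  funext i; fin_cases i <;> rfl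

lemma int_le_sq (b : ℤ) : b ≤ b * b := by nlinarith [sq_nonneg b, sq_nonneg (b - 1)]

lemma int_neg_le_sq (b : ℤ) : -b ≤ b * b := by nlinarith [sq_nonneg b, sq_nonneg (b + 1)]

lemma zero_or_one (b : ℤ) (h : b * b = b) : b = 0 ∨ b = 1 := by
  have h' : b * (b - 1) = 0 := by linear_combination h
  rcases mul_eq_zero.mp h' with h'' | h'' <;> omega

lemma zero_or_negone (b : ℤ) (h : b * b = -b) : b = 0 ∨ b = -1 := by
  have h' : b * (b + 1) = 0 := by linear_combination h
  rcases mul_eq_zero.mp h' with h'' | h'' <;> omega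

lemma relE1 : WRel ![0,1,0,0,0,0,0] ![0,1,0,0,0,0,0] := rel_refl _

lemma relE2 : WRel ![0,0,1,0,0,0,0] ![0,1,0,0,0,0,0] :=
  rel_step _ _ ![0,-1,1,0,0,0,0] (by decide) (by decide) (by decide)

lemma relE3 : WRel ![0,0,0,1,0,0,0] ![0,1,0,0,0,0,0] :=
  rel_step _ _ ![0,-1,0,1,0,0,0] (by decide) (by decide) (by decide)

lemma relE4 : WRel ![0,0,0,0,1,0,0] ![0,1,0,0,0,0,0] :=
  rel_step _ _ ![0,-1,0,0,1,0,0] (by decide) (by decide) (by decide)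

lemma relE5 : WRel ![0,0,0,0,0,1,0] ![0,1,0,0,0,0,0] :=
  rel_step _ _ ![0,-1,0,0,0,1,0] (by decide) (by decide) (by decide)

lemma relE6 : WRel ![0,0,0,0,0,0,1] ![0,1,0,0,0,0,0] :=
  rel_step _ _ ![0,-1,0,0,0,0,1] (by decide) (by decide) (by decide)

lemma relF12 : WRel ![1,-1,-1,0,0,0,0] ![0,1,0,0,0,0,0] :=
  rel_trans (rel_step _ ![0,0,0,1,0,0,0] ![1,-1,-1,-1,0,0,0] (by decide) (by decide) (by decide)) relE3

lemma relF13 : WRel ![1,-1,0,-1,0,0,0] ![0,1,0,0,0,0,0] :=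
  rel_trans (rel_step _ ![0,0,1,0,0,0,0] ![1,-1,-1,-1,0,0,0] (by decide) (by decide) (by decide)) relE2

lemma relF14 : WRel ![1,-1,0,0,-1,0,0] ![0,1,0,0,0,0,0] :=
  rel_trans (rel_step _ ![0,0,1,0,0,0,0] ![1,-1,-1,0,-1,0,0] (by decide) (by decide) (by decide)) relE2

lemma relF15 : WRel ![1,-1,0,0,0,-1,0] ![0,1,0,0,0,0,0] :=
  rel_trans (rel_step _ ![0,0,1,0,0,0,0] ![1,-1,-1,0,0,-1,0] (by decide) (by decide) (by decide)) relE2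

lemma relF16 : WRel ![1,-1,0,0,0,0,-1] ![0,1,0,0,0,0,0] :=
  rel_trans (rel_step _ ![0,0,1,0,0,0,0] ![1,-1,-1,0,0,0,-1] (by decide) (by decide) (by decide)) relE2

lemma relF23 : WRel ![1,0,-1,-1,0,0,0] ![0,1,0,0,0,0,0] :=
  rel_trans (rel_step _ ![0,1,0,0,0,0,0] ![1,-1,-1,-1,0,0,0] (by decide) (by decide) (by decide)) relE1

lemma relF24 : WRel ![1,0,-1,0,-1,0,0] ![0,1,0,0,0,0,0] :=
  rel_trans (rel_step _ ![0,1,0,0,0,0,0] ![1,-1,-1,0,-1,0,0] (by decide) (by decide) (by decide)) relE1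

lemma relF25 : WRel ![1,0,-1,0,0,-1,0] ![0,1,0,0,0,0,0] :=
  rel_trans (rel_step _ ![0,1,0,0,0,0,0] ![1,-1,-1,0,0,-1,0] (by decide) (by decide) (by decide)) relE1

lemma relF26 : WRel ![1,0,-1,0,0,0,-1] ![0,1,0,0,0,0,0] :=
  rel_trans (rel_step _ ![0,1,0,0,0,0,0] ![1,-1,-1,0,0,0,-1] (by decide) (by decide) (by decide)) relE1

lemma relF34 : WRel ![1,0,0,-1,-1,0,0] ![0,1,0,0,0,0,0] :=
  rel_trans (rel_step _ ![0,1,0,0,0,0,0] ![1,-1,0,-1,-1,0,0] (by decide) (by decide) (by decide)) relE1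

lemma relF35 : WRel ![1,0,0,-1,0,-1,0] ![0,1,0,0,0,0,0] :=
  rel_trans (rel_step _ ![0,1,0,0,0,0,0] ![1,-1,0,-1,0,-1,0] (by decide) (by decide) (by decide)) relE1

lemma relF36 : WRel ![1,0,0,-1,0,0,-1] ![0,1,0,0,0,0,0] :=
  rel_trans (rel_step _ ![0,1,0,0,0,0,0] ![1,-1,0,-1,0,0,-1] (by decide) (by decide) (by decide)) relE1

lemma relF45 : WRel ![1,0,0,0,-1,-1,0] ![0,1,0,0,0,0,0] :=
  rel_trans (rel_step _ ![0,1,0,0,0,0,0] ![1,-1,0,0,-1,-1,0] (by decide) (by decide) (by decide)) relE1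

lemma relF46 : WRel ![1,0,0,0,-1,0,-1] ![0,1,0,0,0,0,0] :=
  rel_trans (rel_step _ ![0,1,0,0,0,0,0] ![1,-1,0,0,-1,0,-1] (by decide) (by decide) (by decide)) relE1

lemma relF56 : WRel ![1,0,0,0,0,-1,-1] ![0,1,0,0,0,0,0] :=
  rel_trans (rel_step _ ![0,1,0,0,0,0,0] ![1,-1,0,0,0,-1,-1] (by decide) (by decide) (by decide)) relE1

lemma relG1 : WRel ![2,0,-1,-1,-1,-1,-1] ![0,1,0,0,0,0,0] :=
  rel_trans (rel_step _ ![1,0,0,0,0,-1,-1] ![1,0,-1,-1,-1,0,0] (by decide) (by decide) (by decide)) relF56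

lemma relG2 : WRel ![2,-1,0,-1,-1,-1,-1] ![0,1,0,0,0,0,0] :=
  rel_trans (rel_step _ ![1,0,0,0,0,-1,-1] ![1,-1,0,-1,-1,0,0] (by decide) (by decide) (by decide)) relF56

lemma relG3 : WRel ![2,-1,-1,0,-1,-1,-1] ![0,1,0,0,0,0,0] :=
  rel_trans (rel_step _ ![1,0,0,0,0,-1,-1] ![1,-1,-1,0,-1,0,0] (by decide) (by decide) (by decide)) relF56

lemma relG4 : WRel ![2,-1,-1,-1,0,-1,-1] ![0,1,0,0,0,0,0] :=
  rel_trans (rel_step _ ![1,0,0,0,0,-1,-1] ![1,-1,-1,-1,0,0,0] (by decide) (by decide) (by decide)) relF56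

lemma relG5 : WRel ![2,-1,-1,-1,-1,0,-1] ![0,1,0,0,0,0,0] :=
  rel_trans (rel_step _ ![1,0,0,0,-1,0,-1] ![1,-1,-1,-1,0,0,0] (by decide) (by decide) (by decide)) relF46

lemma relG6 : WRel ![2,-1,-1,-1,-1,-1,0] ![0,1,0,0,0,0,0] :=
  rel_trans (rel_step _ ![1,0,0,0,-1,-1,0] ![1,-1,-1,-1,0,0,0] (by decide) (by decide) (by decide)) relF45

set_option maxHeartbeats 2000000 in
lemma toE1 (y : L) (hy : y ∈ Yset) : WRel y ![0,1,0,0,0,0,0] := by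
  obtain ⟨h1, h2⟩ := hy
  have e1 : 3 * y 0 + (y 1 + y 2 + y 3 + y 4 + y 5 + y 6) = 1 := by
    have h := h1
    rw [B] at h
    rw [show hv 0 = 3 from rfl, show hv 1 = -1 from rfl, show hv 2 = -1 from rfl,
        show hv 3 = -1 from rfl, show hv 4 = -1 from rfl, show hv 5 = -1 from rfl,
        show hv 6 = -1 from rfl] at h
    linarith
  have e2 : y 0 * y 0 - (y 1 * y 1 + y 2 * y 2 + y 3 * y 3 + y 4 * y 4 + y 5 * y 5 + y 6 * y 6) = -1 := h2
  have key : (y 1 + y 2 + y 3 + y 4 + y 5 + y 6) * (y 1 + y 2 + y 3 + y 4 + y 5 + y 6) ≤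
      6 * (y 1 * y 1 + y 2 * y 2 + y 3 * y 3 + y 4 * y 4 + y 5 * y 5 + y 6 * y 6) := by
    nlinarith [sq_nonneg (y 1 - y 2), sq_nonneg (y 1 - y 3), sq_nonneg (y 1 - y 4), sq_nonneg (y 1 - y 5), sq_nonneg (y 1 - y 6), sq_nonneg (y 2 - y 3), sq_nonneg (y 2 - y 4), sq_nonneg (y 2 - y 5), sq_nonneg (y 2 - y 6), sq_nonneg (y 3 - y 4), sq_nonneg (y 3 - y 5), sq_nonneg (y 3 - y 6), sq_nonneg (y 4 - y 5), sq_nonneg (y 4 - y 6), sq_nonneg (y 5 - y 6)]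
  have hs1 : y 1 + y 2 + y 3 + y 4 + y 5 + y 6 = 1 - 3 * y 0 := by linarith
  rw [hs1] at key
  have h3 : 0 ≤ y 0 := by nlinarith [key, sq_nonneg (y 0 + 1)]
  have h4 : y 0 ≤ 2 := by nlinarith [key, sq_nonneg (y 0 - 3)]
  have ha : y 0 = 0 ∨ y 0 = 1 ∨ y 0 = 2 := by omega
  rcases ha with ha0 | ha0 | ha0 <;> rw [ha0] at e1 e2
  · have t1 : y 1 * y 1 = y 1 := by linarith [int_le_sq (y 1), int_le_sq (y 2), int_le_sq (y 3), int_le_sq (y 4), int_le_sq (y 5), int_le_sq (y 6)]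
    have t2 : y 2 * y 2 = y 2 := by linarith [int_le_sq (y 1), int_le_sq (y 2), int_le_sq (y 3), int_le_sq (y 4), int_le_sq (y 5), int_le_sq (y 6)]
    have t3 : y 3 * y 3 = y 3 := by linarith [int_le_sq (y 1), int_le_sq (y 2), int_le_sq (y 3), int_le_sq (y 4), int_le_sq (y 5), int_le_sq (y 6)]
    have t4 : y 4 * y 4 = y 4 := by linarith [int_le_sq (y 1), int_le_sq (y 2), int_le_sq (y 3), int_le_sq (y 4), int_le_sq (y 5), int_le_sq (y 6)]
    have t5 : y 5 * y 5 = y 5 := by linarith [int_le_sq (y 1), int_le_sq (y 2), int_le_sq (y 3), int_le_sq (y 4), int_le_sq (y 5), int_le_sq (y 6)]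
    have t6 : y 6 * y 6 = y 6 := by linarith [int_le_sq (y 1), int_le_sq (y 2), int_le_sq (y 3), int_le_sq (y 4), int_le_sq (y 5), int_le_sq (y 6)]
    have hb1 := zero_or_one _ t1
    have hb2 := zero_or_one _ t2
    have hb3 := zero_or_one _ t3
    have hb4 := zero_or_one _ t4
    have hb5 := zero_or_one _ t5
    have hb6 := zero_or_one _ t6
    rcases hb1 with c1|c1 <;> rcases hb2 with c2|c2 <;> rcases hb3 with c3|c3 <;> rcases hb4 with c4|c4 <;> rcases hb5 with c5|c5 <;> rcases hb6 with c6|c6 <;>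
      first
      | (exfalso; omega)
      | (rw [eta7 y, ha0, c1, c2, c3, c4, c5, c6]
         first | exact relE1 | exact relE2 | exact relE3 | exact relE4 | exact relE5 | exact relE6)
  · have t1 : y 1 * y 1 = -(y 1) := by linarith [int_neg_le_sq (y 1), int_neg_le_sq (y 2), int_neg_le_sq (y 3), int_neg_le_sq (y 4), int_neg_le_sq (y 5), int_neg_le_sq (y 6)]
    have t2 : y 2 * y 2 = -(y 2) := by linarith [int_neg_le_sq (y 1), int_neg_le_sq (y 2), int_neg_le_sq (y 3), int_neg_le_sq (y 4), int_neg_le_sq (y 5), int_neg_le_sq (y 6)]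
    have t3 : y 3 * y 3 = -(y 3) := by linarith [int_neg_le_sq (y 1), int_neg_le_sq (y 2), int_neg_le_sq (y 3), int_neg_le_sq (y 4), int_neg_le_sq (y 5), int_neg_le_sq (y 6)]
    have t4 : y 4 * y 4 = -(y 4) := by linarith [int_neg_le_sq (y 1), int_neg_le_sq (y 2), int_neg_le_sq (y 3), int_neg_le_sq (y 4), int_neg_le_sq (y 5), int_neg_le_sq (y 6)]
    have t5 : y 5 * y 5 = -(y 5) := by linarith [int_neg_le_sq (y 1), int_neg_le_sq (y 2), int_neg_le_sq (y 3), int_neg_le_sq (y 4), int_neg_le_sq (y 5), int_neg_le_sq (y 6)]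
    have t6 : y 6 * y 6 = -(y 6) := by linarith [int_neg_le_sq (y 1), int_neg_le_sq (y 2), int_neg_le_sq (y 3), int_neg_le_sq (y 4), int_neg_le_sq (y 5), int_neg_le_sq (y 6)]
    have hb1 := zero_or_negone _ t1
    have hb2 := zero_or_negone _ t2
    have hb3 := zero_or_negone _ t3
    have hb4 := zero_or_negone _ t4
    have hb5 := zero_or_negone _ t5
    have hb6 := zero_or_negone _ t6
    rcases hb1 with c1|c1 <;> rcases hb2 with c2|c2 <;> rcases hb3 with c3|c3 <;> rcases hb4 with c4|c4 <;> rcases hb5 with c5|c5 <;> rcases hb6 with c6|c6 <;>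
      first
      | (exfalso; omega)
      | (rw [eta7 y, ha0, c1, c2, c3, c4, c5, c6]
         first | exact relF12 | exact relF13 | exact relF14 | exact relF15 | exact relF16 | exact relF23 | exact relF24 | exact relF25 | exact relF26 | exact relF34 | exact relF35 | exact relF36 | exact relF45 | exact relF46 | exact relF56)
  · have t1 : y 1 * y 1 = -(y 1) := by linarith [int_neg_le_sq (y 1), int_neg_le_sq (y 2), int_neg_le_sq (y 3), int_neg_le_sq (y 4), int_neg_le_sq (y 5), int_neg_le_sq (y 6)]
    have t2 : y 2 * y 2 = -(y 2) := by linarith [int_neg_le_sq (y 1), int_neg_le_sq (y 2), int_neg_le_sq (y 3), int_neg_le_sq (y 4), int_neg_le_sq (y 5), int_neg_le_sq (y 6)]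
    have t3 : y 3 * y 3 = -(y 3) := by linarith [int_neg_le_sq (y 1), int_neg_le_sq (y 2), int_neg_le_sq (y 3), int_neg_le_sq (y 4), int_neg_le_sq (y 5), int_neg_le_sq (y 6)]
    have t4 : y 4 * y 4 = -(y 4) := by linarith [int_neg_le_sq (y 1), int_neg_le_sq (y 2), int_neg_le_sq (y 3), int_neg_le_sq (y 4), int_neg_le_sq (y 5), int_neg_le_sq (y 6)]
    have t5 : y 5 * y 5 = -(y 5) := by linarith [int_neg_le_sq (y 1), int_neg_le_sq (y 2), int_neg_le_sq (y 3), int_neg_le_sq (y 4), int_neg_le_sq (y 5), int_neg_le_sq (y 6)]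
    have t6 : y 6 * y 6 = -(y 6) := by linarith [int_neg_le_sq (y 1), int_neg_le_sq (y 2), int_neg_le_sq (y 3), int_neg_le_sq (y 4), int_neg_le_sq (y 5), int_neg_le_sq (y 6)]
    have hb1 := zero_or_negone _ t1
    have hb2 := zero_or_negone _ t2
    have hb3 := zero_or_negone _ t3
    have hb4 := zero_or_negone _ t4
    have hb5 := zero_or_negone _ t5
    have hb6 := zero_or_negone _ t6
    rcases hb1 with c1|c1 <;> rcases hb2 with c2|c2 <;> rcases hb3 with c3|c3 <;> rcases hb4 with c4|c4 <;> rcases hb5 with c5|c5 <;> rcases hb6 with c6|c6 <;>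
      first
      | (exfalso; omega)
      | (rw [eta7 y, ha0, c1, c2, c3, c4, c5, c6]
         first | exact relG1 | exact relG2 | exact relG3 | exact relG4 | exact relG5 | exact relG6)

/-- `G` acts transitively on the 27 lines. -/
theorem weyl_transitive_on_lines (y y' : L) (hy : y ∈ Yset) (hy' : y' ∈ Yset) :
    ∃ g ∈ G, g y = y' := by
  obtain ⟨g, hg, hgy⟩ := rel_trans (toE1 y hy) (rel_symm (toE1 y' hy'))
  exact ⟨g, hg, hgy⟩
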